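/- For every q ≥ 1 there exists a constant c = c(q) > 0 such that every q × N real matrix with no repeated elements in any row contains a q × N' cupcap submatrix with N' ≥ c(log N)^{1/q}. -/

import Mathlib

/-- A sequence is a cup if `x i + x l ≥ 2 * x j` for all `i < j < l`. -/
def IsCup {n : ℕ} (x : Fin n → ℝ) : Prop :=
  ∀ i j l : Fin n, i < j → j < l → x i + x l ≥ 2 * x j

/-- A sequence is a cap if `x i + x l ≤ 2 * x j` for all `i < j < l`. -/
def IsCap {n : ℕ} (x : Fin n → ℝ) : Prop :=
  ∀ i j l : Fin n, i < j → j < l → x i + x l ≤ 2 * x j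

namespace CupCap

open List

variable {ι : Type*}

/-- Cup property of a list of picks, w.r.t. values `x`. -/
def Gd (x : ι → ℝ) (l : List ι) : Prop :=
  ∀ a b c : ι, [a, b, c] <+ l → x a + x c ≥ 2 * x b

/-- Cap property of a list of picks. -/
def Gc (x : ι → ℝ) (l : List ι) : Prop :=
  ∀ a b c : ι, [a, b, c] <+ l → x a + x c ≤ 2 * x b

lemma Gd.sublist {x : ι → ℝ} {l l' : List ι} (h : Gd x l') (hs : l <+ l') : Gd x l :=
  fun a b c ht => h a b c (ht.trans hs)

lemma Gc.sublist {x : ι → ℝ} {l l' : List ι} (h : Gc x l') (hs : l <+ l') : Gc x l :=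
  fun a b c ht => h a b c (ht.trans hs)

lemma gd_of_short {x : ι → ℝ} {l : List ι} (h : l.length ≤ 2) : Gd x l := by
  intro a b c ht
  have := ht.length_le
  simp at this; omega

lemma gc_of_short {x : ι → ℝ} {l : List ι} (h : l.length ≤ 2) : Gc x l := by
  intro a b c ht
  have := ht.length_le
  simp at this; omega

/-- decompose a triple sublist of `l ++ [t]`. -/
lemma triple_snoc {l : List ι} {t a b c : ι} (h : [a, b, c] <+ l ++ [t]) :
    [a, b, c] <+ l ∨ ([a, b] <+ l ∧ c = t) := by
  rw [List.sublist_append_iff] at h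
  obtain ⟨l₁, l₂, he, h₁, h₂⟩ := h
  rcases List.sublist_singleton.mp h₂ with h2 | h2
  · subst h2
    simp only [List.append_nil] at he
    left; exact he ▸ h₁
  · subst h2
    rcases l₁ with _ | ⟨x₁, _ | ⟨x₂, _ | ⟨x₃, l₁'⟩⟩⟩ <;> simp_all

/-- decompose a triple sublist of `u :: l`. -/
lemma triple_cons {l : List ι} {u a b c : ι} (h : [a, b, c] <+ u :: l) :
    [a, b, c] <+ l ∨ (a = u ∧ [b, c] <+ l) := by
  rcases List.sublist_cons_iff.mp h with h' | ⟨r, hr, hrl⟩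
  · exact Or.inl h'
  · right
    injection hr with h1 h2
    subst h2
    exact ⟨h1, hrl⟩

/-- In a pairwise list, the head is `R`-below every other member. -/
lemma head_rel {R : ι → ι → Prop} {U : List ι} (hU : U.Pairwise R) (hne : U ≠ [])
    {v : ι} (hv : v ∈ U) : v = U.head hne ∨ R (U.head hne) v := by
  rcases U with _ | ⟨u, t⟩
  · simp at hne
  · rcases List.mem_cons.mp hv with h | h
    · left; simpa using h
    · right; exact (List.pairwise_cons.mp hU).1 v h

/-- In a pairwise list, every member is `R`-below the last. -/
lemma rel_getLast {R : ι → ι → Prop} {U : List ι} (hU : U.Pairwise R) (hne : U ≠ [])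
    {v : ι} (hv : v ∈ U) : v = U.getLast hne ∨ R v (U.getLast hne) := by
  have hd := List.dropLast_append_getLast hne
  rw [← hd] at hU hv
  rw [List.pairwise_append] at hU
  rcases List.mem_append.mp hv with h | h
  · right; exact hU.2.2 v h _ (by simp)
  · left; simpa using h

/-- removing the last element: if `t ∉ l` and `l <+ U` with `U = U.dropLast ++ [t]`. -/
lemma sublist_dropLast {l U : List ι} (hne : U ≠ []) (h : l <+ U) (ht : U.getLast hne ∉ l) :
    l <+ U.dropLast := by
  have hd := List.dropLast_append_getLast hne
  rw [← hd] at h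
  rw [List.sublist_append_iff] at h
  obtain ⟨l₁, l₂, he, h₁, h₂⟩ := h
  rcases List.sublist_singleton.mp h₂ with h2 | h2
  · subst h2; simpa [he]
  · exfalso; apply ht; rw [he, h2]; simp

lemma snoc_getLast_sublist {l U : List ι} (hne : U ≠ []) (h : l <+ U)
    (ht : U.getLast hne ∉ l) : l ++ [U.getLast hne] <+ U := by
  conv_rhs => rw [← List.dropLast_append_getLast hne]
  exact (sublist_dropLast hne h ht).append (List.Sublist.refl _)

lemma cons_head_sublist {l U : List ι} (hne : U ≠ []) (h : l <+ U)
    (ht : U.head hne ∉ l) : U.head hne :: l <+ U := by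
  rcases U with _ | ⟨u, t⟩
  · simp at hne
  · simp only [List.head_cons] at ht ⊢
    rcases List.sublist_cons_iff.mp h with h' | ⟨r, hr, _⟩
    · exact h'.cons₂ u
    · exfalso; exact ht (hr ▸ (List.mem_cons_self (a := u) (l := r)))


section Thm1

open Classical in
/-- 1-dimensional theorem: a list along which `x` strictly increases, of length `> 2^(a+b)`,
contains a cup of length `a+1` or a cap of length `b+1`. -/
theorem thm1 (x : ι → ℝ) : ∀ (n a b : ℕ), a + b ≤ n → ∀ U : List ι,
    U.Pairwise (fun p s => x p < x s) → 2 ^ (a + b) < U.length →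
    ∃ l, l <+ U ∧ ((l.length = a + 1 ∧ Gd x l) ∨ (l.length = b + 1 ∧ Gc x l)) := by
  intro n
  induction n with
  | zero =>
    intro a b hab U hU hlen
    have ha : a = 0 := by omega
    have hne : U ≠ [] := by rintro rfl; simp at hlen
    refine ⟨[U.head hne], List.singleton_sublist.mpr (List.head_mem hne), Or.inl ?_⟩
    exact ⟨by simp [ha], gd_of_short (by simp)⟩
  | succ n ih =>
    intro a b hab U hU hlen
    rcases Nat.eq_zero_or_pos a with ha | ha
    · have hne : U ≠ [] := by rintro rfl; simp at hlen
      refine ⟨[U.head hne], List.singleton_sublist.mpr (List.head_mem hne), Or.inl ?_⟩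
      exact ⟨by simp [ha], gd_of_short (by simp)⟩
    rcases Nat.eq_zero_or_pos b with hb | hb
    · have hne : U ≠ [] := by rintro rfl; simp at hlen
      refine ⟨[U.head hne], List.singleton_sublist.mpr (List.head_mem hne), Or.inr ?_⟩
      exact ⟨by simp [hb], gc_of_short (by simp)⟩
    -- main case
    have hne : U ≠ [] := by rintro rfl; simp at hlen
    set u := U.head hne with hu
    set T := U.getLast hne with hT
    have huU : u ∈ U := List.head_mem hne
    have hTU : T ∈ U := List.getLast_mem hne
    have hlen2 : 2 ≤ U.length := by
      have : 2 ≤ 2 ^ (a + b) := by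
        have : 1 ≤ a + b := by omega
        calc 2 = 2 ^ 1 := by norm_num
        _ ≤ 2 ^ (a + b) := Nat.pow_le_pow_right (by norm_num) this
      omega
    have huT : x u < x T := by
      -- head and last are distinct positions; values increase
      rcases rel_getLast hU hne huU with h | h
      · exfalso
        -- u = T: then U has length ≥ 2 with head = getLast; contradiction with pairwise? no!
        rcases U with _ | ⟨v, _ | ⟨w, t⟩⟩
        · simp at hne
        · simp at hlen2
        · -- U = v :: w :: t  : head = v, getLast ∈ w :: t
          have hg : T ∈ w :: t := by
            have h2 : T = (w :: t).getLast (by simp) := by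
              rw [hT]; exact List.getLast_cons (by simp)
            rw [h2]; exact List.getLast_mem _
          have hv : x v < x T := (List.pairwise_cons.mp hU).1 T hg
          rw [← hT] at h
          rw [← h] at hv
          exact lt_irrefl _ hv
      · exact h
    set μ := (x u + x T) / 2 with hμ
    set L := U.filter (fun p => decide (x p ≤ μ)) with hL
    set R := U.filter (fun p => !(decide (x p ≤ μ))) with hR
    have hLR : U.length = L.length + R.length := List.length_eq_length_filter_add _
    have hmemL : ∀ v ∈ L, x v ≤ μ := by
      intro v hv
      have := (List.mem_filter.mp hv).2
      simpa using this
    have hmemR : ∀ v ∈ R, μ < x v := by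
      intro v hv
      have := (List.mem_filter.mp hv).2
      simp only [Bool.not_eq_true', decide_eq_false_iff_not, not_le] at this
      exact this
    have hxu : ∀ v ∈ U, v = u ∨ x u < x v := fun v hv => head_rel hU hne hv
    have hxT : ∀ v ∈ U, x v ≤ x T := by
      intro v hv
      rcases rel_getLast hU hne hv with h | h
      · rw [h]
      · exact le_of_lt h
    have hxu' : ∀ v ∈ U, x u ≤ x v := by
      intro v hv
      rcases hxu v hv with h | h
      · rw [h]
      · exact le_of_lt h
    rcases le_or_gt R.length L.length with hcase | hcase
    · -- L is big : cups
      have hLbig : 2 ^ (a - 1 + b) < L.length := by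
        have h1 : 2 ^ (a + b) < L.length + L.length := by omega
        have h2 : a + b = (a - 1 + b) + 1 := by omega
        rw [h2, pow_succ] at h1
        omega
      have hLpw : L.Pairwise (fun p s => x p < x s) := hU.sublist (List.filter_sublist (l := U))
      obtain ⟨l, hlL, hl⟩ := ih (a - 1) b (by omega) L hLpw hLbig
      rcases hl with ⟨hlen', hgd⟩ | ⟨hlen', hgc⟩
      · -- cup of length a in L ; extend with T
        have hTnotl : T ∉ l := by
          intro hTl
          have : x T ≤ μ := hmemL T (hlL.subset hTl)
          rw [hμ] at this; linarith
        have hsub : l ++ [T] <+ U := snoc_getLast_sublist hne (hlL.trans (List.filter_sublist (l := U))) hTnotl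
        refine ⟨l ++ [T], hsub, Or.inl ⟨by simp [hlen']; omega, ?_⟩⟩
        intro p s c htrip
        rcases triple_snoc htrip with h | ⟨hps, rfl⟩
        · exact hgd p s c h
        · have hpl : p ∈ l := hps.subset (by simp)
          have hsl : s ∈ l := hps.subset (by simp)
          have hpL : p ∈ L := hlL.subset hpl
          have hsL : s ∈ L := hlL.subset hsl
          have h1 : x s ≤ μ := hmemL s hsL
          have h2 : x u ≤ x p := hxu' p ((hlL.trans (List.filter_sublist (l := U))).subset hpl)
          rw [hμ] at h1
          linarith
      · exact ⟨l, hlL.trans (List.filter_sublist (l := U)), Or.inr ⟨hlen', hgc⟩⟩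
    · -- R is big : caps
      have hRbig : 2 ^ (a + (b - 1)) < R.length := by
        have h1 : 2 ^ (a + b) < R.length + R.length := by omega
        have h2 : a + b = (a + (b - 1)) + 1 := by omega
        rw [h2, pow_succ] at h1
        omega
      have hRpw : R.Pairwise (fun p s => x p < x s) := hU.sublist (List.filter_sublist (l := U))
      obtain ⟨l, hlR, hl⟩ := ih a (b - 1) (by omega) R hRpw hRbig
      rcases hl with ⟨hlen', hgd⟩ | ⟨hlen', hgc⟩
      · exact ⟨l, hlR.trans (List.filter_sublist (l := U)), Or.inl ⟨hlen', hgd⟩⟩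
      · -- cap of length b in R ; extend with u in front
        have hunotl : u ∉ l := by
          intro hul
          have : μ < x u := hmemR u (hlR.subset hul)
          rw [hμ] at this; linarith
        have hsub : u :: l <+ U := cons_head_sublist hne (hlR.trans (List.filter_sublist (l := U))) hunotl
        refine ⟨u :: l, hsub, Or.inr ⟨by simp [hlen']; omega, ?_⟩⟩
        intro p s c htrip
        rcases triple_cons htrip with h | ⟨rfl, hsc⟩
        · exact hgc p s c h
        · have hsl : s ∈ l := hsc.subset (by simp)
          have hcl : c ∈ l := hsc.subset (by simp)
          have h1 : μ < x s := hmemR s (hlR.subset hsl)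
          have h2 : x c ≤ x T := hxT c ((hlR.trans (List.filter_sublist (l := U))).subset hcl)
          rw [hμ] at h1
          linarith
    
end Thm1

section ES

open Function Finset

/-- Erdős–Szekeres (adapted from the mathlib Archive proof by Bhavik Mehta). -/
theorem erdos_szekeres' {α : Type*} [LinearOrder α] {r s n : ℕ} {f : Fin n → α}
    (hn : r * s < n) (hf : Injective f) :
    (∃ t : Finset (Fin n), r < #t ∧ StrictMonoOn f ↑t) ∨
      ∃ t : Finset (Fin n), s < #t ∧ StrictAntiOn f ↑t := by
  let inc_sequences_ending_in : Fin n → Finset (Finset (Fin n)) := fun i =>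
    univ.powerset.filter fun t => Finset.max t = i ∧ StrictMonoOn f ↑t
  let dec_sequences_ending_in : Fin n → Finset (Finset (Fin n)) := fun i =>
    univ.powerset.filter fun t => Finset.max t = i ∧ StrictAntiOn f ↑t
  have inc_i : ∀ i, {i} ∈ inc_sequences_ending_in i := fun i => by
    simp [inc_sequences_ending_in, StrictMonoOn]
  have dec_i : ∀ i, {i} ∈ dec_sequences_ending_in i := fun i => by
    simp [dec_sequences_ending_in, StrictAntiOn]
  let ab' : Fin n → ℕ × ℕ := by
    intro i
    apply
      (max' ((inc_sequences_ending_in i).image card) (Nonempty.image ⟨{i}, inc_i i⟩ _),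
        max' ((dec_sequences_ending_in i).image card) (Nonempty.image ⟨{i}, dec_i i⟩ _))
  generalize hab : ab' = ab
  rsuffices ⟨i, hi⟩ : ∃ i, r < (ab i).1 ∨ s < (ab i).2
  · refine Or.imp ?_ ?_ hi
    on_goal 1 =>
      have : (ab i).1 ∈ image card (inc_sequences_ending_in i) := by
        simp only [← hab]; exact max'_mem _ (Nonempty.image ⟨{i}, inc_i i⟩ _)
    on_goal 2 =>
      have : (ab i).2 ∈ image card (dec_sequences_ending_in i) := by
        simp only [← hab]; exact max'_mem _ (Nonempty.image ⟨{i}, dec_i i⟩ _)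
    all_goals
      intro hi
      rw [mem_image] at this
      obtain ⟨t, ht₁, ht₂⟩ := this
      refine ⟨t, by rwa [ht₂], ?_⟩
      rw [Finset.mem_filter] at ht₁
      apply ht₁.2.2
  have : Injective ab := by
    simp only [← hab]
    apply Function.Injective.of_lt_imp_ne
    intro i j k q
    injection q with q₁ q₂
    cases lt_or_gt_of_ne fun _ => ne_of_lt ‹i < j› (hf ‹f i = f j›)
    on_goal 1 =>
      apply ne_of_lt _ q₁
      have : (ab' i).1 ∈ image card (inc_sequences_ending_in i) := by exact max'_mem _ (Nonempty.image ⟨{i}, inc_i i⟩ _)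
    on_goal 2 =>
      apply ne_of_lt _ q₂
      have : (ab' i).2 ∈ image card (dec_sequences_ending_in i) := by exact max'_mem _ (Nonempty.image ⟨{i}, dec_i i⟩ _)
    all_goals
      rw [Nat.lt_iff_add_one_le]
      apply le_max'
      rw [mem_image] at this ⊢
      rcases this with ⟨t, ht₁, ht₂⟩
      rw [Finset.mem_filter] at ht₁
      have : t.max = i := by simp only [ht₁.2.1]
      refine ⟨insert j t, ?_, ?_⟩
      · rw [Finset.mem_filter]
        refine ⟨?_, ?_, ?_⟩
        · rw [mem_powerset]; apply subset_univ
        · convert max_insert (a := j) (s := t)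
          rw [ht₁.2.1, max_eq_left]
          apply WithBot.coe_le_coe.mpr (le_of_lt ‹i < j›)
        simp only [StrictMonoOn, StrictAntiOn, coe_insert, Set.mem_insert_iff, mem_coe]
        rintro x ⟨rfl | _⟩ y ⟨rfl | _⟩ _
        · apply (irrefl _ ‹j < j›).elim
        · exfalso
          apply not_le_of_gt (_root_.trans ‹i < j› ‹j < y›) (le_max_of_eq ‹y ∈ t› ‹t.max = i›)
        · first
          | apply lt_of_le_of_lt _ ‹f i < f j›
          | apply lt_of_lt_of_le ‹f j < f i› _
          rcases lt_or_eq_of_le (le_max_of_eq ‹x ∈ t› ‹t.max = i›) with (_ | rfl)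
          · apply le_of_lt (ht₁.2.2 ‹x ∈ t› (mem_of_max ‹t.max = i›) ‹x < i›)
          · rfl
        · apply ht₁.2.2 ‹x ∈ t› ‹y ∈ t› ‹x < y›
      · rw [card_insert_of_notMem, ht₂]
        intro
        apply not_le_of_gt ‹i < j› (le_max_of_eq ‹j ∈ t› ‹t.max = i›)
  by_contra! q
  let ran : Finset (ℕ × ℕ) := (Finset.range r).image Nat.succ ×ˢ (Finset.range s).image Nat.succ
  have : image ab univ ⊆ ran := by
    rintro ⟨x₁, x₂⟩
    simp only [ran, mem_image, exists_prop, Finset.mem_range, mem_univ, Finset.mem_product, true_and,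
      Prod.ext_iff]
    rintro ⟨i, rfl, rfl⟩
    specialize q i
    have z : 1 ≤ (ab i).1 ∧ 1 ≤ (ab i).2 := by
      simp only [← hab]
      constructor <;>
        · apply le_max'
          rw [mem_image]
          exact ⟨{i}, by solve_by_elim, card_singleton i⟩
    exact ⟨⟨(ab i).1 - 1, by omega⟩, (ab i).2 - 1, by omega⟩
  apply not_le_of_gt hn
  simpa [ran, Nat.succ_injective, card_image_of_injective, ‹Injective ab›] using card_le_card this

end ES

section Monotonize

variable [LinearOrder ι]

lemma es_step {y : ι → ℝ} (hy : Function.Injective y) (m : ℕ) (U : List ι)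
    (hU : U.Pairwise (· < ·)) (hlen : m * m < U.length) :
    ∃ U', U' <+ U ∧ m < U'.length ∧
      (U'.Pairwise (fun p s => y p < y s) ∨ U'.Pairwise (fun p s => y s < y p)) := by
  have hgetmono : StrictMono U.get := List.SortedLT.strictMono_get (by
    rw [List.sortedLT_iff_pairwise]; exact hU)
  have hfinj : Function.Injective (fun i : Fin U.length => y (U.get i)) :=
    hy.comp hgetmono.injective
  rcases erdos_szekeres' (r := m) (s := m) hlen hfinj with ⟨t, ht, hmono⟩ | ⟨t, ht, hmono⟩ <;>
  · set is := t.sort (· ≤ ·) with his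
    have hsort : is.Pairwise (· < ·) := (Finset.sortedLT_sort t).pairwise
    have hsort' : is.Pairwise (fun i j : Fin U.length => (i : ℕ) < (j : ℕ)) := by
      refine hsort.imp ?_
      intro i j hij
      exact hij
    have hmem : ∀ i ∈ is, i ∈ t := fun i hi => (Finset.mem_sort _).mp hi
    refine ⟨is.map U.get, List.map_getElem_sublist hsort', ?_, ?_⟩
    · rw [List.length_map, Finset.length_sort]; exact ht
    · first
      | · left
          rw [List.pairwise_map]
          refine hsort.imp_of_mem ?_
          intro i j hi hj hij
          exact hmono (hmem i hi) (hmem j hj) hij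
      | · right
          rw [List.pairwise_map]
          refine hsort.imp_of_mem ?_
          intro i j hi hj hij
          exact hmono (hmem i hi) (hmem j hj) hij

lemma monotonize : ∀ (q : ℕ) (x : Fin q → ι → ℝ), (∀ r, Function.Injective (x r)) →
    ∀ (m : ℕ) (U : List ι), U.Pairwise (· < ·) → m ^ (2 ^ q) < U.length →
    ∃ U', U' <+ U ∧ m < U'.length ∧ ∀ r,
      (U'.Pairwise (fun p s => x r p < x r s)) ∨ (U'.Pairwise (fun p s => x r s < x r p)) := by
  intro q
  induction q with
  | zero =>
    intro x hx m U hU hlen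
    exact ⟨U, List.Sublist.refl U, by simpa using hlen, fun r => r.elim0⟩
  | succ q ih =>
    intro x hx m U hU hlen
    obtain ⟨U₁, hU₁s, hU₁len, hU₁mono⟩ := ih (fun r => x r.castSucc) (fun r => hx _) (m * m) U hU
      (by
        have : (m * m) ^ 2 ^ q = m ^ 2 ^ (q + 1) := by
          rw [← pow_two, ← pow_mul]
          ring_nf
        omega)
    obtain ⟨U', hU's, hU'len, hU'mono⟩ := es_step (hx (Fin.last q)) m U₁
      (hU.sublist hU₁s) hU₁len
    refine ⟨U', hU's.trans hU₁s, hU'len, ?_⟩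
    intro r
    refine Fin.lastCases ?_ ?_ r
    · exact hU'mono
    · intro i
      rcases hU₁mono i with h | h
      · exact Or.inl (h.sublist hU's)
      · exact Or.inr (h.sublist hU's)

end Monotonize

section ThmQ

/-- inner recursion for the bound -/
def boundStep (t : ℕ) : ℕ → ℕ
  | 0 => 0
  | (m+1) => t * (boundStep t m + 1) + 2

/-- The bound for the `q`-dimensional theorem. -/
def BoundQ : ℕ → ℕ → ℕ → ℕ → ℕ
  | 0, k, _, _ => k
  | 1, _, a, b => 2 ^ (a + b)
  | (q+2), k, a, b => boundStep (2 * (q + 2) * (BoundQ (q+1) k k k + 1) + 1) (min a b - 1)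

theorem thmQ : ∀ (q k : ℕ), 1 ≤ k → ∀ (a b : ℕ), 1 ≤ a → a ≤ k → 1 ≤ b → b ≤ k →
    ∀ (x : Fin q → ι → ℝ) (U : List ι),
    (∀ r, U.Pairwise (fun p s => x r p < x r s)) →
    BoundQ q k a b < U.length →
    ∃ l, l <+ U ∧
      ((l.length = a ∧ ∀ r, Gd (x r) l) ∨ (l.length = b ∧ ∀ r, Gc (x r) l) ∨
       (l.length = k ∧ ∀ r, Gd (x r) l ∨ Gc (x r) l)) := by
  intro q
  induction q using Nat.strong_induction_on with
  | _ q ihq =>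
    match q with
    | 0 =>
      intro k hk a b ha hak hb hbk xx U hU hlen
      refine ⟨U.take k, List.take_sublist k U, Or.inr (Or.inr ⟨?_, fun r => r.elim0⟩)⟩
      simp only [List.length_take]
      have : BoundQ 0 k a b = k := rfl
      omega
    | 1 =>
      intro k hk a b ha hak hb hbk xx U hU hlen
      have hlen' : 2 ^ ((a-1) + (b-1)) < U.length := by
        have h1 : BoundQ 1 k a b = 2 ^ (a + b) := rfl
        have h2 : (2:ℕ) ^ ((a-1)+(b-1)) ≤ 2 ^ (a+b) := Nat.pow_le_pow_right (by norm_num) (by omega)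
        omega
      obtain ⟨l, hlU, hl⟩ := thm1 (xx 0) ((a-1)+(b-1)) (a-1) (b-1) le_rfl U (hU 0) hlen'
      have hr0 : ∀ r : Fin 1, xx r = xx 0 := fun r => by
        have : r = 0 := Subsingleton.elim r 0
        rw [this]
      rcases hl with ⟨hlen'', hgd⟩ | ⟨hlen'', hgc⟩
      · exact ⟨l, hlU, Or.inl ⟨by omega, fun r => (hr0 r) ▸ hgd⟩⟩
      · exact ⟨l, hlU, Or.inr (Or.inl ⟨by omega, fun r => (hr0 r) ▸ hgc⟩)⟩
    | (q+2) =>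
      intro k hk a
      induction a using Nat.strong_induction_on with
      | _ a iha =>
        intro b ha hak hb hbk xx U hU hlen
        have hne : U ≠ [] := by
          rintro rfl; simp at hlen
        -- quick outs
        rcases Nat.lt_or_ge a 2 with ha1 | ha2
        · refine ⟨[U.head hne], List.singleton_sublist.mpr (List.head_mem hne),
            Or.inl ⟨by simp; omega, fun r => gd_of_short (by simp)⟩⟩
        rcases Nat.lt_or_ge b 2 with hb1 | hb2
        · refine ⟨[U.head hne], List.singleton_sublist.mpr (List.head_mem hne),
            Or.inr (Or.inl ⟨by simp; omega, fun r => gc_of_short (by simp)⟩)⟩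
        -- setup
        set σ' := BoundQ (q+1) k k k + 1 with hσ'
        set T := 2 * (q+2) * σ' + 1 with hT
        set B' := BoundQ (q+2) k (a-1) (b-1) with hB'
        set s0 := B' + 1 with hs0
        have hBmin : B' = boundStep T (min a b - 2) := by
          rw [hB']
          show boundStep (2 * (q + 2) * (BoundQ (q+1) k k k + 1) + 1) (min (a-1) (b-1) - 1) = _
          congr 1
          omega
        have hlen2 : T * s0 + 2 < U.length := by
          have h1 : BoundQ (q+2) k a b = boundStep T (min a b - 1) := rfl
          have h2 : min a b - 1 = (min a b - 2) + 1 := by omega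
          rw [h1, h2] at hlen
          simp only [boundStep] at hlen
          rw [← hBmin, ← hs0] at hlen
          omega
        set u₀ := U.head hne with hu₀def
        set W := U.tail with hWdef
        have hUW : U = u₀ :: W := (List.cons_head_tail hne).symm
        have hWU : W <+ U := List.tail_sublist U
        have hWlen : T * s0 + 2 ≤ W.length := by
          have : W.length = U.length - 1 := by rw [hWdef]; exact List.length_tail
          omega
        set V := W.take (T * s0) with hVdef
        set rest := W.drop (T * s0) with hrestdef
        have hWVrest : W = V ++ rest := (List.take_append_drop _ W).symm
        have hVlen : V.length = T * s0 := by
          rw [hVdef, List.length_take]; omega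
        have hrestne : rest ≠ [] := by
          have : rest.length = W.length - T * s0 := by rw [hrestdef]; exact List.length_drop
          intro h; rw [h] at this; simp at this; omega
        have hVW : V <+ W := hVdef ▸ List.take_sublist _ _
        have hVU : V <+ U := hVW.trans hWU
        set uE := rest.getLast hrestne with huEdef
        have huErest : uE ∈ rest := List.getLast_mem hrestne
        -- value facts
        have hu₀W : ∀ r, ∀ v ∈ W, xx r u₀ < xx r v := by
          intro r v hv
          have := hU r
          rw [hUW] at this
          exact (List.pairwise_cons.mp this).1 v hv
        have huEV : ∀ r, ∀ v ∈ V, xx r v < xx r uE := by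
          intro r v hv
          have hpw : W.Pairwise (fun p s => xx r p < xx r s) := (hU r).sublist hWU
          rw [hWVrest, List.pairwise_append] at hpw
          exact hpw.2.2 v hv uE huErest
        -- blocks
        set blk : ℕ → List ι := fun j => (V.drop (j * s0)).take s0 with hblkdef
        have hblklen : ∀ j < T, (blk j).length = s0 := by
          intro j hj
          rw [hblkdef]
          simp only [List.length_take, List.length_drop, hVlen]
          have h6 : (j+1) * s0 = j * s0 + s0 := Nat.succ_mul j s0
          have h7 : (j+1) * s0 ≤ T * s0 := Nat.mul_le_mul_right _ (by omega)
          omega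
        have hblkne : ∀ j < T, blk j ≠ [] := by
          intro j hj h
          have := hblklen j hj
          rw [h] at this
          simp at this
        have hblkV : ∀ j, blk j <+ V :=
          fun j => (List.take_sublist _ _).trans (List.drop_sublist _ _)
        have hblkU : ∀ j, blk j <+ U := fun j => (hblkV j).trans hVU
        classical
        set hd : ℕ → ι := fun j => if h : blk j ≠ [] then (blk j).head h else u₀ with hhddef
        set en : ℕ → ι := fun j => if h : blk j ≠ [] then (blk j).getLast h else u₀ with hendef
        have hhd : ∀ j (h : j < T), hd j = (blk j).head (hblkne j h) := by
          intro j h; rw [hhddef]; simp [hblkne j h]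
        have hen : ∀ j (h : j < T), en j = (blk j).getLast (hblkne j h) := by
          intro j h; rw [hendef]; simp [hblkne j h]
        have hhdmem : ∀ j, j < T → hd j ∈ blk j := by
          intro j h; rw [hhd j h]; exact List.head_mem _
        have henmem : ∀ j, j < T → en j ∈ blk j := by
          intro j h; rw [hen j h]; exact List.getLast_mem _
        have hhdle : ∀ r j, j < T → ∀ v ∈ blk j, xx r (hd j) ≤ xx r v := by
          intro r j hj v hv
          have hpw : (blk j).Pairwise (fun p s => xx r p < xx r s) := (hU r).sublist (hblkU j)
          rcases head_rel hpw (hblkne j hj) hv with h | h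
          · rw [h, hhd j hj]
          · rw [hhd j hj]; exact le_of_lt h
        have henle : ∀ r j, j < T → ∀ v ∈ blk j, xx r v ≤ xx r (en j) := by
          intro r j hj v hv
          have hpw : (blk j).Pairwise (fun p s => xx r p < xx r s) := (hU r).sublist (hblkU j)
          rcases rel_getLast hpw (hblkne j hj) hv with h | h
          · rw [h, hen j hj]
          · rw [hen j hj]; exact le_of_lt h
        -- cross-block comparison
        have hcross : ∀ r (i j : ℕ), i < j → j < T → ∀ p ∈ blk i, ∀ s ∈ blk j,
            xx r p < xx r s := by
          intro r i j hij hj p hp s hs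
          have h1 : blk i <+ V.take (j * s0) := by
            have he : blk i = (V.take (i * s0 + s0)).drop (i * s0) := by
              show (V.drop (i * s0)).take s0 = _
              rw [List.drop_take (i := i * s0) (j := i * s0 + s0) (l := V)]
              congr 1
              omega
            rw [he]
            refine (List.drop_sublist _ _).trans ?_
            have h2 : V.take (i * s0 + s0) = (V.take (j * s0)).take (i * s0 + s0) := by
              rw [List.take_take (i := i * s0 + s0) (j := j * s0) (l := V)]
              congr 1
              have h6 : (i+1) * s0 = i * s0 + s0 := Nat.succ_mul i s0
              have h7 : (i+1) * s0 ≤ j * s0 := Nat.mul_le_mul_right _ (by omega)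
              omega
            rw [h2]
            exact List.take_sublist _ _
          have h2 : blk j <+ V.drop (j * s0) := List.take_sublist _ _
          have h3 : blk i ++ blk j <+ V := by
            have := h1.append h2
            rwa [List.take_append_drop] at this
          have hpw : (blk i ++ blk j).Pairwise (fun p s => xx r p < xx r s) :=
            (hU r).sublist (h3.trans hVU)
          exact (List.pairwise_append.mp hpw).2.2 p hp s hs
        -- selection sublist lemma
        have sel : ∀ (F : ℕ → ι), (∀ j, j < T → F j ∈ blk j) →
            ∀ (js : List ℕ) (m : ℕ), js.Pairwise (· < ·) → (∀ j ∈ js, m ≤ j ∧ j < T) →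
            (js.map F) <+ V.drop (m * s0) := by
          intro F hF js
          induction js with
          | nil => intro m _ _; simp
          | cons j js' ihs =>
            intro m hpw hmem
            have hj := hmem j (by simp)
            have hpw' := List.pairwise_cons.mp hpw
            have h1 : [F j] <+ blk j := List.singleton_sublist.mpr (hF j hj.2)
            have h2 : js'.map F <+ V.drop ((j+1) * s0) := by
              apply ihs (j+1) hpw'.2
              intro i hi
              exact ⟨hpw'.1 i hi, (hmem i (by simp [hi])).2⟩
            have h3 : (j :: js').map F = [F j] ++ js'.map F := by simp
            rw [h3]
            have h4 : [F j] ++ js'.map F <+ blk j ++ (V.drop (j * s0)).drop s0 := by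
              apply List.Sublist.append h1
              have : (V.drop (j * s0)).drop s0 = V.drop ((j+1) * s0) := by
                rw [List.drop_drop]
                congr 1
                ring
              rw [this]
              exact h2
            have h5 : blk j ++ (V.drop (j * s0)).drop s0 = V.drop (j * s0) := by
              rw [hblkdef]
              exact List.take_append_drop _ _
            rw [h5] at h4
            refine h4.trans ?_
            exact List.drop_sublist_drop_left _ (Nat.mul_le_mul_right _ hj.1)
        -- flags
        set tailFlag : Fin (q+2) → ℕ → Prop :=
          fun r j => xx r (en j) - xx r (hd j) ≤ xx r uE - xx r (en j) with htaildef
        set headFlag : Fin (q+2) → ℕ → Prop :=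
          fun r j => xx r (en j) - xx r (hd j) ≤ xx r (hd j) - xx r u₀ with hheaddef
        by_cases hflag : ∃ j, j < T ∧ ∀ r, tailFlag r j ∧ headFlag r j
        · -- FLAGGED case: recurse inside the block and extend
          obtain ⟨j, hjT, hflags⟩ := hflag
          have hblen : BoundQ (q+2) k (a-1) (b-1) < (blk j).length := by
            rw [hblklen j hjT]; omega
          obtain ⟨l, hlblk, hl⟩ := iha (a-1) (by omega) (b-1) (by omega) (by omega)
            (by omega) (by omega) xx (blk j) (fun r => (hU r).sublist (hblkU j)) hblen
          have hlU : l <+ U := hlblk.trans (hblkU j)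
          have hlV : ∀ v ∈ l, v ∈ blk j := fun v hv => hlblk.subset hv
          rcases hl with ⟨hlen', hgd⟩ | ⟨hlen', hgc⟩ | ⟨hlen', hmix⟩
          · -- extend the all-cup by uE
            have huEnotl : uE ∉ l := by
              intro hl'
              have h1 : uE ∈ V := (hblkV j).subset (hlV uE hl')
              exact lt_irrefl _ (huEV ⟨0, by omega⟩ uE h1)
            have hsub : l ++ [uE] <+ U := by
              rw [hUW, hWVrest]
              refine List.Sublist.cons u₀ ?_
              exact List.Sublist.append (hlblk.trans (hblkV j))
                (List.singleton_sublist.mpr huErest)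
            refine ⟨l ++ [uE], hsub, Or.inl ⟨by simp [hlen']; omega, ?_⟩⟩
            intro r p s c htrip
            rcases triple_snoc htrip with h | ⟨hps, rfl⟩
            · exact hgd r p s c h
            · have hp : p ∈ blk j := hlV p (hps.subset (by simp))
              have hs : s ∈ blk j := hlV s (hps.subset (by simp))
              have h1 : xx r s ≤ xx r (en j) := henle r j hjT s hs
              have h2 : xx r (hd j) ≤ xx r p := hhdle r j hjT p hp
              have h3 : xx r (en j) - xx r (hd j) ≤ xx r uE - xx r (en j) := (hflags r).1
              linarith
          · -- extend the all-cap by u₀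
            have hu₀notl : u₀ ∉ l := by
              intro hl'
              have h1 : u₀ ∈ W := hWVrest ▸ List.mem_append.mpr
                (Or.inl ((hblkV j).subset (hlV u₀ hl')))
              exact lt_irrefl _ (hu₀W ⟨0, by omega⟩ u₀ h1)
            have hsub : u₀ :: l <+ U := by
              rw [hUW, hWVrest]
              refine List.Sublist.cons₂ u₀ ?_
              exact ((hlblk.trans (hblkV j)).trans (List.sublist_append_left V rest))
            refine ⟨u₀ :: l, hsub, Or.inr (Or.inl ⟨by simp [hlen']; omega, ?_⟩)⟩
            intro r p s c htrip
            rcases triple_cons htrip with h | ⟨rfl, hsc⟩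
            · exact hgc r p s c h
            · have hs : s ∈ blk j := hlV s (hsc.subset (by simp))
              have hc : c ∈ blk j := hlV c (hsc.subset (by simp))
              have h1 : xx r (hd j) ≤ xx r s := hhdle r j hjT s hs
              have h2 : xx r c ≤ xx r (en j) := henle r j hjT c hc
              have h3 : xx r (en j) - xx r (hd j) ≤ xx r (hd j) - xx r u₀ := (hflags r).2
              linarith
          · exact ⟨l, hlU, Or.inr (Or.inr ⟨hlen', hmix⟩)⟩
        · -- UNFLAGGED case: a stuck class occurs ≥ σ'+1 times
          push_neg at hflag
          have hbad : ∀ j, j < T → ∃ p : Fin (q+2) × Bool,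
              (p.2 = true → ¬ tailFlag p.1 j) ∧ (p.2 = false → ¬ headFlag p.1 j) := by
            intro j hj
            obtain ⟨r, hr⟩ := hflag j hj
            by_cases ht : tailFlag r j
            · exact ⟨(r, false), fun hc => by simp at hc, fun _ => hr ht⟩
            · exact ⟨(r, true), fun _ => ht, fun hc => by simp at hc⟩
          set g : ℕ → Fin (q+2) × Bool :=
            fun j => if h : j < T then Classical.choose (hbad j h) else (⟨0, by omega⟩, true)
            with hgdef
          have hmaps : ∀ j ∈ Finset.range T, g j ∈ (Finset.univ : Finset (Fin (q+2) × Bool)) :=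
            fun j _ => Finset.mem_univ _
          have hcard : (Finset.univ : Finset (Fin (q+2) × Bool)).card * σ' < (Finset.range T).card := by
            rw [Finset.card_range, Finset.card_univ]
            simp only [Fintype.card_prod, Fintype.card_fin, Fintype.card_bool]
            rw [Nat.mul_comm (q+2) 2, hT]
            omega
          obtain ⟨y, _, hy⟩ := Finset.exists_lt_card_fiber_of_mul_lt_card_of_maps_to hmaps hcard
          set Jset := Finset.filter (fun j => g j = y) (Finset.range T) with hJdef
          set js := Jset.sort (· ≤ ·) with hjsdef
          have hjs_pw : js.Pairwise (· < ·) := (Finset.sortedLT_sort _).pairwise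
          have hjs_len : σ' < js.length := by rw [hjsdef, Finset.length_sort]; exact hy
          have hjs_mem : ∀ j ∈ js, j < T ∧ g j = y := by
            intro j hj
            have := (Finset.mem_sort (α := ℕ) (· ≤ ·)).mp hj
            rw [hJdef, Finset.mem_filter, Finset.mem_range] at this
            exact this
          obtain ⟨rhat, side⟩ := y
          have hstuck : ∀ j ∈ js, (side = true → ¬ tailFlag rhat j) ∧
              (side = false → ¬ headFlag rhat j) := by
            intro j hj
            obtain ⟨hjT, hgj⟩ := hjs_mem j hj
            have hspec := Classical.choose_spec (hbad j hjT)
            rw [hgdef] at hgj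
            simp only [dif_pos hjT] at hgj
            rw [hgj] at hspec
            exact hspec
          -- pick endpoints according to the side
          set F : ℕ → ι := if side then en else hd with hFdef
          have hFmem : ∀ j, j < T → F j ∈ blk j := by
            intro j hj
            rw [hFdef]
            cases side
            · simp only [Bool.false_eq_true, if_false]
              exact hhdmem j hj
            · simp only [if_true]
              exact henmem j hj
          set E := js.map F with hEdef
          have hEV : E <+ V := by
            have := sel F hFmem js 0 hjs_pw (fun j hj => ⟨Nat.zero_le _, (hjs_mem j hj).1⟩)
            simpa using this
          have hEU : E <+ U := hEV.trans hVU
          have hElen : BoundQ (q+1) k k k < E.length := by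
            rw [hEdef, List.length_map]
            omega
          set xx' : Fin (q+1) → ι → ℝ := fun r' => xx (rhat.succAbove r') with hx'def
          have hx'pw : ∀ r', E.Pairwise (fun p s => xx' r' p < xx' r' s) :=
            fun r' => (hU _).sublist hEU
          obtain ⟨l, hlE, hl⟩ := ihq (q+1) (by omega) k hk k k hk le_rfl hk le_rfl xx' E hx'pw hElen
          have hlk : l.length = k := by
            rcases hl with ⟨h, _⟩ | ⟨h, _⟩ | ⟨h, _⟩ <;> exact h
          have hlother : ∀ r', Gd (xx' r') l ∨ Gc (xx' r') l := by
            rcases hl with ⟨_, h⟩ | ⟨_, h⟩ | ⟨_, h⟩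
            · exact fun r' => Or.inl (h r')
            · exact fun r' => Or.inr (h r')
            · exact h
          -- the triple decomposition in E
          have htriple : ∀ p s c : ι, [p,s,c] <+ l → ∃ i j m : ℕ,
              i < j ∧ j < m ∧ i ∈ js ∧ j ∈ js ∧ m ∈ js ∧ p = F i ∧ s = F j ∧ c = F m := by
            intro p s c htrip
            have h3 : [p,s,c] <+ js.map F := (htrip.trans hlE)
            rw [List.sublist_map_iff] at h3
            obtain ⟨l'', hsub, heq⟩ := h3
            have hlen3 : l''.length = 3 := by
              have := congrArg List.length heq
              simp at this
              omega
            rcases l'' with _ | ⟨i, _ | ⟨j, _ | ⟨m, _ | ⟨w, l₅⟩⟩⟩⟩ <;> simp at hlen3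
            simp only [List.map_cons, List.map_nil] at heq
            injection heq with e1 heq
            injection heq with e2 heq
            injection heq with e3 _
            have hpw3 : ([i,j,m] : List ℕ).Pairwise (· < ·) := hjs_pw.sublist hsub
            have hij : i < j := (List.pairwise_cons.mp hpw3).1 j (by simp)
            have hjm : j < m := by
              have := (List.pairwise_cons.mp (List.pairwise_cons.mp hpw3).2).1 m (by simp)
              exact this
            exact ⟨i, j, m, hij, hjm, hsub.subset (by simp), hsub.subset (by simp),
              hsub.subset (by simp), e1, e2, e3⟩
          -- property for the special row
          have hspecial : Gd (xx rhat) l ∨ Gc (xx rhat) l := by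
            cases hside : side
            · -- head-stuck: free cup on block starts
              left
              intro p s c htrip
              obtain ⟨i, j, m, hij, hjm, hi, hj, hm, rfl, rfl, rfl⟩ := htriple p s c htrip
              have hjT := (hjs_mem j hj).1
              have hiT := (hjs_mem i hi).1
              have hmT := (hjs_mem m hm).1
              have hFi : F i = hd i := by rw [hFdef, hside]; simp
              have hFj : F j = hd j := by rw [hFdef, hside]; simp
              have hFm : F m = hd m := by rw [hFdef, hside]; simp
              have hstuckj : xx rhat (hd j) - xx rhat u₀ < xx rhat (en j) - xx rhat (hd j) := by
                have h0 : ¬ headFlag rhat j := (hstuck j hj).2 hside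
                have h0' : ¬ (xx rhat (en j) - xx rhat (hd j) ≤ xx rhat (hd j) - xx rhat u₀) := h0
                linarith [lt_of_not_ge h0']
              have h1 : xx rhat u₀ < xx rhat (hd i) := by
                apply hu₀W
                exact hWVrest ▸ List.mem_append.mpr (Or.inl ((hblkV i).subset (hhdmem i hiT)))
              have h2 : xx rhat (en j) < xx rhat (hd m) :=
                hcross rhat j m hjm hmT _ (henmem j hjT) _ (hhdmem m hmT)
              have h3 : xx rhat (hd i) < xx rhat (hd j) :=
                hcross rhat i j hij hjT _ (hhdmem i hiT) _ (hhdmem j hjT)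
              rw [hFi, hFj, hFm]
              linarith
            · -- tail-stuck: free cap on block ends
              right
              intro p s c htrip
              obtain ⟨i, j, m, hij, hjm, hi, hj, hm, rfl, rfl, rfl⟩ := htriple p s c htrip
              have hjT := (hjs_mem j hj).1
              have hiT := (hjs_mem i hi).1
              have hmT := (hjs_mem m hm).1
              have hFi : F i = en i := by rw [hFdef, hside]; simp
              have hFj : F j = en j := by rw [hFdef, hside]; simp
              have hFm : F m = en m := by rw [hFdef, hside]; simp
              have hstuckj : xx rhat uE - xx rhat (en j) < xx rhat (en j) - xx rhat (hd j) := by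
                have h0 : ¬ tailFlag rhat j := (hstuck j hj).1 hside
                have h0' : ¬ (xx rhat (en j) - xx rhat (hd j) ≤ xx rhat uE - xx rhat (en j)) := h0
                linarith [lt_of_not_ge h0']
              have h1 : xx rhat (en m) < xx rhat uE := by
                apply huEV
                exact (hblkV m).subset (henmem m hmT)
              have h2 : xx rhat (en i) < xx rhat (hd j) :=
                hcross rhat i j hij hjT _ (henmem i hiT) _ (hhdmem j hjT)
              have h3 : xx rhat (en j) < xx rhat (en m) :=
                hcross rhat j m hjm hmT _ (henmem j hjT) _ (henmem m hmT)
              rw [hFi, hFj, hFm]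
              linarith
          refine ⟨l, (hlE.trans hEU), Or.inr (Or.inr ⟨hlk, ?_⟩)⟩
          intro r
          by_cases hr : r = rhat
          · rw [hr]; exact hspecial
          · obtain ⟨r', hr'⟩ := Fin.exists_succAbove_eq hr
            have := hlother r'
            rw [hx'def] at this
            simp only at this
            rw [hr'] at this
            exact this

end ThmQ

section Est

lemma boundStep_le (t : ℕ) (ht : 1 ≤ t) : ∀ m, boundStep t m + 1 ≤ (3*t)^(m+1) := by
  intro m
  induction m with
  | zero =>
    show 0 + 1 ≤ (3*t)^1
    simp
    omega
  | succ m ih =>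
    have hX : 3 ≤ (3*t)^(m+1) := by
      have h1 : 3*t ≤ (3*t)^(m+1) := Nat.le_self_pow (by omega) _
      omega
    have htX : 3 ≤ t * (3*t)^(m+1) := by
      have : 1 * (3*t)^(m+1) ≤ t * (3*t)^(m+1) := Nat.mul_le_mul_right _ (by omega)
      omega
    have heq : (3*t)^(m+2) = 3 * (t * (3*t)^(m+1)) := by
      rw [pow_succ]
      ring
    have hmul : t * (boundStep t m + 1) ≤ t * (3*t)^(m+1) := Nat.mul_le_mul_left _ ih
    have hbs : boundStep t (m+1) + 1 = t * (boundStep t m + 1) + 3 := by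
      show t * (boundStep t m + 1) + 2 + 1 = _
      omega
    show _ ≤ (3*t)^(m+2)
    omega

def Ee : ℕ → ℕ
  | 0 => 3
  | 1 => 3
  | (q+2) => Ee (q+1) + q + 4

lemma boundQ_est : ∀ q, 1 ≤ q → ∀ k, 1 ≤ k → BoundQ q k k k + 1 ≤ 2 ^ (Ee q * k ^ q) := by
  intro q
  induction q using Nat.strong_induction_on with
  | _ q ihq =>
    match q with
    | 0 => intro h; omega
    | 1 =>
      intro _ k hk
      have h1 : BoundQ 1 k k k = 2 ^ (k + k) := rfl
      have h2 : Ee 1 * k ^ 1 = 3 * k := by simp [Ee]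
      have h3 : k + k + 1 ≤ 3 * k := by omega
      have h4 : (2:ℕ) ^ (k+k) + 1 ≤ 2 ^ (k+k+1) := by
        have : (2:ℕ)^(k+k) ≥ 1 := Nat.one_le_two_pow
        rw [pow_succ]
        omega
      have h5 : (2:ℕ) ^ (k+k+1) ≤ 2 ^ (3*k) := Nat.pow_le_pow_right (by omega) h3
      rw [h2]
      omega
    | (q+2) =>
      intro _ k hk
      have hIH : BoundQ (q+1) k k k + 1 ≤ 2 ^ (Ee (q+1) * k ^ (q+1)) :=
        ihq (q+1) (by omega) (by omega) k hk
      set B1 := BoundQ (q+1) k k k with hB1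
      set T := 2 * (q + 2) * (B1 + 1) + 1 with hTd
      have hQ2 : BoundQ (q+2) k k k = boundStep T (k - 1) := by
        show boundStep (2 * (q + 2) * (BoundQ (q+1) k k k + 1) + 1) (min k k - 1) = _
        rw [min_self]
      have hT1 : 1 ≤ T := by omega
      have h1 : BoundQ (q+2) k k k + 1 ≤ (3*T)^k := by
        rw [hQ2]
        have := boundStep_le T hT1 (k-1)
        have hk' : k - 1 + 1 = k := by omega
        rwa [hk'] at this
      -- 3T ≤ 2^(q+4) * (B1+1)
      have hq16 : 6*q + 15 ≤ 2^(q+4) := by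
        have h2q : q < 2 ^ q := Nat.lt_two_pow_self
        have : 2^(q+4) = 16 * 2^q := by rw [pow_add]; ring
        have h16 : 16 * (q+1) ≤ 16 * 2^q := Nat.mul_le_mul_left _ h2q
        omega
      have h3T : 3*T ≤ 2^(q+4) * (B1+1) := by
        have e1 : 3*T = 6*(q+2)*(B1+1) + 3 := by rw [hTd]; ring
        have e2 : 6*(q+2)*(B1+1) + 3 ≤ 6*(q+2)*(B1+1) + 3*(B1+1) := by
          have : 1 ≤ B1 + 1 := by omega
          omega
        have e3 : 6*(q+2)*(B1+1) + 3*(B1+1) = (6*q+15)*(B1+1) := by ring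
        have e4 : (6*q+15)*(B1+1) ≤ 2^(q+4)*(B1+1) := Nat.mul_le_mul_right _ hq16
        omega
      have h3T2 : 3*T ≤ 2^(q+4+Ee (q+1) * k^(q+1)) := by
        have e1 : (2:ℕ)^(q+4+Ee (q+1) * k^(q+1)) = 2^(q+4) * 2^(Ee (q+1) * k^(q+1)) :=
          pow_add 2 _ _
        have e2 : 2^(q+4) * (B1+1) ≤ 2^(q+4) * 2^(Ee (q+1) * k^(q+1)) :=
          Nat.mul_le_mul_left _ hIH
        omega
      have h2 : (3*T)^k ≤ 2^((q+4+Ee (q+1) * k^(q+1))*k) := by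
        rw [pow_mul]
        exact Nat.pow_le_pow_left h3T2 k
      have h3 : (q+4+Ee (q+1) * k^(q+1))*k ≤ Ee (q+2) * k^(q+2) := by
        have e1 : (q+4+Ee (q+1) * k^(q+1))*k = (q+4)*k + Ee (q+1) * (k^(q+1)*k) := by ring
        have e2 : k^(q+1)*k = k^(q+2) := by rw [← pow_succ]
        have e3 : k ≤ k^(q+2) := Nat.le_self_pow (by omega) _
        have e4 : (q+4)*k ≤ (q+4)*k^(q+2) := Nat.mul_le_mul_left _ e3
        have e5 : Ee (q+2) = Ee (q+1) + q + 4 := rfl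
        have e6 : Ee (q+2) * k^(q+2) = Ee (q+1) * k^(q+2) + (q+4)*k^(q+2) := by
          rw [e5]; ring
        rw [e1, e2, e6]
        omega
      have h4 : (2:ℕ)^((q+4+Ee (q+1) * k^(q+1))*k) ≤ 2^(Ee (q+2) * k^(q+2)) :=
        Nat.pow_le_pow_right (by omega) h3
      omega

end Est

section Wrap

lemma triple_get_sublist {l : List ι} {k : ℕ} (hlk : l.length = k) (i j m : Fin k)
    (hij : i < j) (hjm : j < m) :
    [l.get (Fin.cast hlk.symm i), l.get (Fin.cast hlk.symm j), l.get (Fin.cast hlk.symm m)]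
      <+ l := by
  have hp : List.Pairwise (fun x1 x2 : Fin l.length => (x1 : ℕ) < (x2 : ℕ))
      [Fin.cast hlk.symm i, Fin.cast hlk.symm j, Fin.cast hlk.symm m] := by
    rw [Fin.lt_def] at hij hjm
    refine List.Pairwise.cons ?_ (List.Pairwise.cons ?_ (List.pairwise_singleton _ _))
    · intro a ha
      rcases List.mem_cons.mp ha with rfl | ha
      · simpa using hij
      · rcases List.mem_singleton.mp ha with rfl
        simp only [Fin.coe_cast]
        omega
    · intro a ha
      rcases List.mem_singleton.mp ha with rfl
      simpa using hjm
  have := List.map_getElem_sublist hp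
  simpa using this

lemma list_get_cup {x : ι → ℝ} {l : List ι} (h : Gd x l) {k : ℕ} (hlk : l.length = k) :
    IsCup (fun j : Fin k => x (l.get (Fin.cast hlk.symm j))) := by
  intro i j m hij hjm
  exact h _ _ _ (triple_get_sublist hlk i j m hij hjm)

lemma list_get_cap {x : ι → ℝ} {l : List ι} (h : Gc x l) {k : ℕ} (hlk : l.length = k) :
    IsCap (fun j : Fin k => x (l.get (Fin.cast hlk.symm j))) := by
  intro i j m hij hjm
  exact h _ _ _ (triple_get_sublist hlk i j m hij hjm)

lemma list_get_strictMono {y : ι → ℝ} {l : List ι} {k : ℕ} (hlk : l.length = k)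
    (h : l.Pairwise (fun p s => y p < y s)) :
    StrictMono (fun j : Fin k => y (l.get (Fin.cast hlk.symm j))) := by
  intro a b hab
  exact List.pairwise_iff_get.mp h _ _ (by rw [Fin.lt_def]; simpa using hab)

lemma list_get_strictAnti {y : ι → ℝ} {l : List ι} {k : ℕ} (hlk : l.length = k)
    (h : l.Pairwise (fun p s => y s < y p)) :
    StrictAnti (fun j : Fin k => y (l.get (Fin.cast hlk.symm j))) := by
  intro a b hab
  exact List.pairwise_iff_get.mp h _ _ (by rw [Fin.lt_def]; simpa using hab)

end Wrap

end CupCap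

/-- For every `q ≥ 1`, there is `c = c(q) > 0` such that every `q × N` real matrix with
no repeated elements in any row contains a `q × N'` cupcap submatrix with
`N' ≥ c (log N)^(1/q)`. -/
theorem cupcap_submatrix (q : ℕ) (hq : 1 ≤ q) :
    ∃ c : ℝ, 0 < c ∧ ∀ N : ℕ, ∀ M : Fin q → Fin N → ℝ,
      (∀ i, Function.Injective (M i)) →
      ∃ N' : ℕ, c * Real.log N ^ ((1 : ℝ) / q) ≤ N' ∧
        ∃ g : Fin N' → Fin N, StrictMono g ∧
          ∀ i, (StrictMono (fun j => M i (g j)) ∨ StrictAnti (fun j => M i (g j))) ∧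
            (IsCup (fun j => M i (g j)) ∨ IsCap (fun j => M i (g j))) := by
  classical
  set G : ℕ := CupCap.Ee q * 2 ^ q with hGdef
  have hG1 : 1 ≤ G := by
    have h1 : 1 ≤ CupCap.Ee q := by
      rcases q with _ | _ | q'
      · omega
      · simp [CupCap.Ee]
      · have : CupCap.Ee (q'+1+1) = CupCap.Ee (q'+1) + q' + 4 := rfl
        omega
    have h2 : 1 ≤ 2 ^ q := Nat.one_le_two_pow
    calc 1 = 1 * 1 := by norm_num
    _ ≤ CupCap.Ee q * 2 ^ q := Nat.mul_le_mul h1 h2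
  set D : ℝ := (2 * G) * Real.log 2 with hDdef
  have hD0 : 0 < D := by
    have h2 : (0:ℝ) < Real.log 2 := Real.log_pos (by norm_num)
    have hg : (0:ℝ) < 2 * G := by positivity
    positivity
  have hq0 : (q:ℝ) ≠ 0 := by
    have : (1:ℝ) ≤ q := by exact_mod_cast hq
    linarith
  refine ⟨(1/2) * (D⁻¹) ^ ((1:ℝ)/q), by positivity, ?_⟩
  intro N M hinj
  have hlogN0 : 0 ≤ Real.log N := by
    rcases Nat.eq_zero_or_pos N with h | h
    · simp [h]
    · exact Real.log_nonneg (by exact_mod_cast h)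
  set xq : ℝ := (Real.log N / D) ^ ((1:ℝ)/q) with hxqdef
  have hx0 : 0 ≤ xq := by
    apply Real.rpow_nonneg
    positivity
  have hkey : (1/2) * (D⁻¹) ^ ((1:ℝ)/q) * Real.log N ^ ((1:ℝ)/q) = (1/2) * xq := by
    rw [hxqdef, div_eq_inv_mul (Real.log (N:ℝ)) D, Real.mul_rpow (by positivity) hlogN0]
    ring
  rw [hkey]
  -- trivial small cases
  rcases Nat.lt_or_ge N 2 with hN1 | hN2
  · -- N = 0 or 1 : log N = 0
    have hlog : Real.log N = 0 := by
      interval_cases N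
      · simp
      · simp
    have hx : xq = 0 := by
      rw [hxqdef, hlog]
      simp
      exact Real.zero_rpow (by positivity)
    rw [hx]
    rcases Nat.eq_zero_or_pos N with h0 | h1
    · refine ⟨0, by norm_num, ⟨fun j => Fin.cast h0.symm j, fun a b hab => a.elim0, ?_⟩⟩
      intro i
      exact ⟨Or.inl (fun a b hab => a.elim0), Or.inl (fun a b c hab hbc => a.elim0)⟩
    · refine ⟨1, by norm_num, ?_⟩
      refine ⟨fun _ => ⟨0, by omega⟩, fun a b hab => absurd (Subsingleton.elim a b)
        (ne_of_lt hab), ?_⟩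
      intro i
      constructor
      · left
        intro a b hab
        exact absurd (Subsingleton.elim a b) (ne_of_lt hab)
      · left
        intro a b c hab hbc
        have : a = b := Subsingleton.elim a b
        exact absurd (this ▸ hab) (lt_irrefl _)
  -- N ≥ 2
  have hN0 : (0:ℝ) < N := by exact_mod_cast Nat.lt_of_lt_of_le (by norm_num) hN2
  have hlogN : 0 < Real.log N := Real.log_pos (by exact_mod_cast hN2)
  rcases lt_or_ge xq 1 with hx1 | hx1
  · -- fallback N' = 1
    refine ⟨1, by push_cast; linarith, ?_⟩
    refine ⟨fun _ => ⟨0, by omega⟩, fun a b hab => absurd (Subsingleton.elim a b)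
      (ne_of_lt hab), ?_⟩
    intro i
    constructor
    · left
      intro a b hab
      exact absurd (Subsingleton.elim a b) (ne_of_lt hab)
    · left
      intro a b c hab hbc
      have : a = b := Subsingleton.elim a b
      exact absurd (this ▸ hab) (lt_irrefl _)
  -- main case
  set k : ℕ := ⌊xq⌋₊ with hkdef
  have hk1 : 1 ≤ k := by
    rw [hkdef]
    exact Nat.le_floor (by exact_mod_cast hx1)
  have hkxq : (k:ℝ) ≤ xq := Nat.floor_le hx0
  have hhalf : (1/2) * xq ≤ (k:ℝ) := by
    rcases lt_or_ge xq 2 with h2 | h2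
    · have : (1:ℝ) ≤ k := by exact_mod_cast hk1
      linarith
    · have := Nat.sub_one_lt_floor xq
      rw [← hkdef] at this
      linarith
  -- the counting condition
  have hcount : 2 ^ (G * k ^ q) < N := by
    have hxqq : xq ^ (q:ℕ) = Real.log N / D := by
      rw [hxqdef, ← Real.rpow_natCast ((Real.log N / D) ^ ((1:ℝ)/q)) q,
        ← Real.rpow_mul (by positivity)]
      rw [one_div, inv_mul_cancel₀ hq0, Real.rpow_one]
    have h1 : ((2:ℝ)) ^ ((G * k ^ q : ℕ) : ℝ) ≤ (2:ℝ) ^ (Real.log N / (2 * Real.log 2)) := by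
      apply Real.rpow_le_rpow_of_exponent_le one_le_two
      have hcast : ((G * k ^ q : ℕ) : ℝ) = (G:ℝ) * (k:ℝ) ^ (q:ℕ) := by push_cast; ring
      rw [hcast]
      have h2 : (k:ℝ) ^ (q:ℕ) ≤ xq ^ (q:ℕ) := by
        apply pow_le_pow_left₀ (by positivity) hkxq
      have h3 : (G:ℝ) * ((k:ℝ) ^ (q:ℕ)) ≤ (G:ℝ) * (Real.log N / D) := by
        rw [← hxqq]
        apply mul_le_mul_of_nonneg_left h2 (by positivity)
      refine le_trans h3 ?_
      have hGR : (0:ℝ) < (G:ℝ) := by exact_mod_cast hG1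
      have hl2 : Real.log 2 ≠ 0 := ne_of_gt (Real.log_pos (by norm_num))
      have e : (G:ℝ) * (Real.log N / D) = Real.log N / (2 * Real.log 2) := by
        rw [hDdef]
        field_simp
      rw [e]
    have h2 : (2:ℝ) ^ (Real.log N / (2 * Real.log 2)) < N := by
      rw [Real.rpow_def_of_pos (by norm_num : (0:ℝ) < 2)]
      have hl2 : (0:ℝ) < Real.log 2 := Real.log_pos (by norm_num)
      have : Real.log 2 * (Real.log N / (2 * Real.log 2)) = Real.log N / 2 := by
        field_simp
      rw [this]
      calc Real.exp (Real.log N / 2) < Real.exp (Real.log N) := by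
            apply Real.exp_lt_exp.mpr
            linarith
      _ = N := Real.exp_log hN0
    have h3 : ((2 ^ (G * k ^ q) : ℕ) : ℝ) < (N:ℝ) := by
      push_cast
      calc ((2:ℝ)) ^ (G * k ^ q : ℕ) = (2:ℝ) ^ ((G * k ^ q : ℕ) : ℝ) :=
            (Real.rpow_natCast 2 _).symm
      _ ≤ (2:ℝ) ^ (Real.log N / (2 * Real.log 2)) := h1
      _ < N := h2
    exact_mod_cast h3
  -- run the machinery
  set m : ℕ := CupCap.BoundQ q k k k + 1 with hmdef
  have hmest : m ≤ 2 ^ (CupCap.Ee q * k ^ q) := CupCap.boundQ_est q hq k hk1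
  have hmcond : m ^ (2 ^ q) < (List.finRange N).length := by
    rw [List.length_finRange]
    have h1 : m ^ (2^q) ≤ (2 ^ (CupCap.Ee q * k ^ q)) ^ (2^q) :=
      Nat.pow_le_pow_left hmest _
    have h2 : (2 ^ (CupCap.Ee q * k ^ q) : ℕ) ^ (2^q) = 2 ^ (G * k ^ q) := by
      rw [← pow_mul]
      congr 1
      rw [hGdef]
      ring
    omega
  obtain ⟨U', hU'sub, hU'len, hU'mono⟩ := CupCap.monotonize q M hinj m (List.finRange N)
    (List.pairwise_lt_finRange N) hmcond
  set x' : Fin q → Fin N → ℝ := fun r =>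
    if U'.Pairwise (fun p s => M r p < M r s) then M r else (fun v => - M r v) with hx'def
  have hx'pw : ∀ r, U'.Pairwise (fun p s => x' r p < x' r s) := by
    intro r
    rw [hx'def]
    by_cases h : U'.Pairwise (fun p s => M r p < M r s)
    · simpa [if_pos h] using h
    · simp only [if_neg h]
      have hdec : U'.Pairwise (fun p s => M r s < M r p) := (hU'mono r).resolve_left h
      exact hdec.imp (fun hab => by linarith)
  have hU'len' : CupCap.BoundQ q k k k < U'.length := by omega
  obtain ⟨l, hlU', houts⟩ := CupCap.thmQ q k hk1 k k hk1 le_rfl hk1 le_rfl x' U' hx'pw hU'len'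
  have hlk : l.length = k := by
    rcases houts with ⟨h, _⟩ | ⟨h, _⟩ | ⟨h, _⟩ <;> exact h
  have hGdGc : ∀ r, CupCap.Gd (x' r) l ∨ CupCap.Gc (x' r) l := by
    rcases houts with ⟨_, h⟩ | ⟨_, h⟩ | ⟨_, h⟩
    · exact fun r => Or.inl (h r)
    · exact fun r => Or.inr (h r)
    · exact h
  have hlU₀ : l.Sublist (List.finRange N) := hlU'.trans hU'sub
  have hlpw : l.Pairwise (· < ·) := (List.pairwise_lt_finRange N).sublist hlU₀
  refine ⟨k, by exact_mod_cast hhalf, ?_⟩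
  refine ⟨fun j : Fin k => l.get (Fin.cast hlk.symm j), ?_, ?_⟩
  · intro a b hab
    exact List.pairwise_iff_get.mp hlpw _ _ (by rw [Fin.lt_def]; simpa using hab)
  intro i
  constructor
  · rcases hU'mono i with hinc | hdec
    · exact Or.inl (CupCap.list_get_strictMono hlk (hinc.sublist hlU'))
    · exact Or.inr (CupCap.list_get_strictAnti hlk (hdec.sublist hlU'))
  · rcases hGdGc i with hgd | hgc
    · by_cases h : U'.Pairwise (fun p s => M i p < M i s)
      · left
        have : x' i = M i := by rw [hx'def]; simp [if_pos h]
        rw [this] at hgd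
        exact CupCap.list_get_cup hgd hlk
      · right
        have hxi : x' i = (fun v => - M i v) := by rw [hx'def]; simp [if_neg h]
        rw [hxi] at hgd
        have hcup := CupCap.list_get_cup hgd hlk
        intro a b c hab hbc
        have := hcup a b c hab hbc
        simp only at this
        linarith
    · by_cases h : U'.Pairwise (fun p s => M i p < M i s)
      · right
        have : x' i = M i := by rw [hx'def]; simp [if_pos h]
        rw [this] at hgc
        exact CupCap.list_get_cap hgc hlk
      · left
        have hxi : x' i = (fun v => - M i v) := by rw [hx'def]; simp [if_neg h]
        rw [hxi] at hgc
        have hcap := CupCap.list_get_cap hgc hlk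
        intro a b c hab hbc
        have := hcap a b c hab hbc
        simp only at this
        linarith
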